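/- For every integer n ≥ 0, e_2p_4(n+54) ≡ e_2p_4(n) (mod 3), where e_2p_4(n) is the sum of e_2(λ) over all partitions λ of n with exactly 4 parts. -/

import Mathlib

open Finset

/-- `e_2 p_4(n)`, the sum of the second elementary symmetric polynomial evaluated at
the parts over all partitions of `n` with exactly `4` parts. -/
def e2p4 (n : ℕ) : ℕ :=
  ∑ π ∈ Finset.univ.filter (fun π : Nat.Partition n => Multiset.card π.parts = 4),
    π.parts.esymm 2

def w2 (a b : ℕ) : ℕ := a*b
def w3 (a b c : ℕ) : ℕ := a*b+a*c+b*c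
def w4 (a b c d : ℕ) : ℕ := a*b+a*c+a*d+b*c+b*d+c*d
def T2 (n : ℕ) : Finset (ℕ×ℕ) :=
  (range (n+1) ×ˢ range (n+1)).filter
    (fun x => 1 ≤ x.1 ∧ x.1 ≤ x.2 ∧ x.1 + x.2 = n)
def T3 (n : ℕ) : Finset (ℕ×ℕ×ℕ) :=
  (range (n+1) ×ˢ range (n+1) ×ˢ range (n+1)).filter
    (fun x => 1 ≤ x.1 ∧ x.1 ≤ x.2.1 ∧ x.2.1 ≤ x.2.2 ∧ x.1 + x.2.1 + x.2.2 = n)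
def T4 (n : ℕ) : Finset (ℕ×ℕ×ℕ×ℕ) :=
  (range (n+1) ×ˢ range (n+1) ×ˢ range (n+1) ×ˢ range (n+1)).filter
    (fun x => 1 ≤ x.1 ∧ x.1 ≤ x.2.1 ∧ x.2.1 ≤ x.2.2.1 ∧ x.2.2.1 ≤ x.2.2.2 ∧
      x.1 + x.2.1 + x.2.2.1 + x.2.2.2 = n)
def PP2 (n : ℕ) : ℕ := (T2 n).card
def SS2 (n : ℕ) : ℕ := ∑ x ∈ T2 n, w2 x.1 x.2
def PP3 (n : ℕ) : ℕ := (T3 n).card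
def SS3 (n : ℕ) : ℕ := ∑ x ∈ T3 n, w3 x.1 x.2.1 x.2.2
def PP4 (n : ℕ) : ℕ := (T4 n).card
def SS4 (n : ℕ) : ℕ := ∑ x ∈ T4 n, w4 x.1 x.2.1 x.2.2.1 x.2.2.2

lemma T2_split (n : ℕ) :
    T2 (n+2) = ((T2 n).image (fun x => (x.1+1, x.2+1))) ∪ {(1, n+1)} := by
  ext ⟨a,b⟩
  simp only [T2, mem_union, mem_image, mem_filter, mem_product, mem_range,
    mem_singleton, Prod.mk.injEq, Prod.exists]
  constructor
  · rintro ⟨⟨ha, hb⟩, h1, h2, h3⟩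
    by_cases hA : a = 1
    · right; omega
    · left; exact ⟨a-1, b-1, ⟨⟨by omega, by omega⟩, by omega, by omega, by omega⟩, by omega, by omega⟩
  · rintro (⟨x, y, ⟨⟨hx, hy⟩, h1, h2, h3⟩, rfl, rfl⟩ | h) <;> omega

lemma mem_T2 {n : ℕ} {x : ℕ×ℕ} (h : x ∈ T2 n) : 1 ≤ x.1 ∧ x.1 ≤ x.2 ∧ x.1 + x.2 = n := by
  simp only [T2, mem_filter] at h; exact h.2
lemma mem_T3 {n : ℕ} {x : ℕ×ℕ×ℕ} (h : x ∈ T3 n) :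
    1 ≤ x.1 ∧ x.1 ≤ x.2.1 ∧ x.2.1 ≤ x.2.2 ∧ x.1 + x.2.1 + x.2.2 = n := by
  simp only [T3, mem_filter] at h; exact h.2

lemma inj2 : Function.Injective (fun x : ℕ×ℕ => (x.1+1, x.2+1)) := by
  rintro ⟨a,b⟩ ⟨c,d⟩ h; simp_all [Prod.ext_iff]

lemma disj2 (n : ℕ) : Disjoint ((T2 n).image (fun x => (x.1+1, x.2+1))) ({(1, n+1)} : Finset (ℕ×ℕ)) := by
  simp only [disjoint_singleton_right, mem_image]
  rintro ⟨x, hx, h⟩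
  have := mem_T2 hx
  simp [Prod.ext_iff] at h
  omega

lemma rP2 (n : ℕ) : PP2 (n+2) = PP2 n + 1 := by
  rw [PP2, T2_split, card_union_of_disjoint (disj2 n), card_image_of_injective _ inj2,
    card_singleton, PP2]

lemma rS2 (n : ℕ) : SS2 (n+2) = SS2 n + (n+1) * PP2 n + (n+1) := by
  rw [SS2, T2_split, sum_union (disj2 n), sum_image (fun a _ b _ h => inj2 h), sum_singleton]
  have : ∀ x ∈ T2 n, w2 (x.1+1) (x.2+1) = w2 x.1 x.2 + n + 1 := by
    intro x hx
    have h := mem_T2 hx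
    simp only [w2]; nlinarith [h.2.2]
  rw [sum_congr rfl this]
  simp [sum_add_distrib, w2, SS2, PP2, mul_comm, mul_add, add_assoc]

lemma T3_split (n : ℕ) :
    T3 (n+3) = ((T3 n).image (fun x => (x.1+1, x.2.1+1, x.2.2+1))) ∪
      ((T2 (n+2)).image (fun y => (1, y.1, y.2))) := by
  ext ⟨a,b,c⟩
  simp only [T3, T2, mem_union, mem_image, mem_filter, mem_product, mem_range,
    Prod.mk.injEq, Prod.exists]
  constructor
  · rintro ⟨⟨ha, hb, hc⟩, h1, h2, h3, h4⟩
    by_cases hA : a = 1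
    · right; exact ⟨b, c, ⟨⟨by omega, by omega⟩, by omega, by omega, by omega⟩, by omega, by omega, by omega⟩
    · left; exact ⟨a-1, b-1, c-1, ⟨⟨by omega, by omega, by omega⟩, by omega, by omega, by omega, by omega⟩,
        by omega, by omega, by omega⟩
  · rintro (⟨x, y, z, ⟨⟨hx, hy, hz⟩, h1, h2, h3, h4⟩, rfl, rfl, rfl⟩ |
      ⟨x, y, ⟨⟨hx, hy⟩, h1, h2, h3⟩, rfl, rfl, rfl⟩) <;> omega

lemma inj3 : Function.Injective (fun x : ℕ×ℕ×ℕ => (x.1+1, x.2.1+1, x.2.2+1)) := by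
  rintro ⟨a,b,c⟩ ⟨d,e,f⟩ h; simp_all [Prod.ext_iff]
lemma inj3' : Function.Injective (fun y : ℕ×ℕ => ((1:ℕ), y.1, y.2)) := by
  rintro ⟨a,b⟩ ⟨c,d⟩ h; simp_all [Prod.ext_iff]

lemma disj3 (n : ℕ) : Disjoint ((T3 n).image (fun x => (x.1+1, x.2.1+1, x.2.2+1)))
    ((T2 (n+2)).image (fun y => ((1:ℕ), y.1, y.2))) := by
  rw [disjoint_left]
  rintro ⟨a,b,c⟩ h1 h2
  simp only [mem_image, Prod.mk.injEq, Prod.exists] at h1 h2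
  obtain ⟨x, y, z, hx, rfl, rfl, rfl⟩ := h1
  obtain ⟨u, v, hu, h, -, -⟩ := h2
  have := mem_T3 hx
  omega

lemma rP3 (n : ℕ) : PP3 (n+3) = PP3 n + PP2 (n+2) := by
  rw [PP3, T3_split, card_union_of_disjoint (disj3 n), card_image_of_injective _ inj3,
    card_image_of_injective _ inj3', PP3, PP2]

lemma rS3 (n : ℕ) : SS3 (n+3) = SS3 n + (2*n+3) * PP3 n + SS2 (n+2) + (n+2) * PP2 (n+2) := by
  rw [SS3, T3_split, sum_union (disj3 n), sum_image (fun a _ b _ h => inj3 h),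
    sum_image (fun a _ b _ h => inj3' h)]
  have e1 : ∀ x ∈ T3 n, w3 (x.1+1) (x.2.1+1) (x.2.2+1) = w3 x.1 x.2.1 x.2.2 + (2*n+3) := by
    intro x hx; have h := mem_T3 hx
    simp only [w3]; nlinarith [h.2.2.2]
  have e2 : ∀ y ∈ T2 (n+2), w3 1 y.1 y.2 = w2 y.1 y.2 + (n+2) := by
    intro y hy; have h := mem_T2 hy
    simp only [w3, w2]; nlinarith [h.2.2]
  rw [sum_congr rfl e1, sum_congr rfl e2]
  simp only [sum_add_distrib, sum_const, smul_eq_mul, SS3, SS2, PP3, PP2]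
  ring

lemma mem_T4 {n : ℕ} {x : ℕ×ℕ×ℕ×ℕ} (h : x ∈ T4 n) :
    1 ≤ x.1 ∧ x.1 ≤ x.2.1 ∧ x.2.1 ≤ x.2.2.1 ∧ x.2.2.1 ≤ x.2.2.2 ∧
      x.1 + x.2.1 + x.2.2.1 + x.2.2.2 = n := by
  simp only [T4, mem_filter] at h; exact h.2

lemma T4_split (n : ℕ) :
    T4 (n+4) = ((T4 n).image (fun x => (x.1+1, x.2.1+1, x.2.2.1+1, x.2.2.2+1))) ∪
      ((T3 (n+3)).image (fun y => (1, y.1, y.2.1, y.2.2))) := by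
  ext ⟨a,b,c,d⟩
  simp only [T4, T3, mem_union, mem_image, mem_filter, mem_product, mem_range,
    Prod.mk.injEq, Prod.exists]
  constructor
  · rintro ⟨⟨ha, hb, hc, hd⟩, h1, h2, h3, h4, h5⟩
    by_cases hA : a = 1
    · right
      exact ⟨b, c, d, ⟨⟨by omega, by omega, by omega⟩, by omega, by omega, by omega, by omega⟩,
        by omega, by omega, by omega, by omega⟩
    · left
      exact ⟨a-1, b-1, c-1, d-1, ⟨⟨by omega, by omega, by omega, by omega⟩,
        by omega, by omega, by omega, by omega, by omega⟩, by omega, by omega, by omega, by omega⟩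
  · rintro (⟨x, y, z, u, ⟨⟨hx, hy, hz, hu⟩, h1, h2, h3, h4, h5⟩, rfl, rfl, rfl, rfl⟩ |
      ⟨x, y, z, ⟨⟨hx, hy, hz⟩, h1, h2, h3, h4⟩, rfl, rfl, rfl, rfl⟩) <;> omega

lemma inj4 : Function.Injective (fun x : ℕ×ℕ×ℕ×ℕ => (x.1+1, x.2.1+1, x.2.2.1+1, x.2.2.2+1)) := by
  rintro ⟨a,b,c,d⟩ ⟨a',b',c',d'⟩ h; simp_all [Prod.ext_iff]
lemma inj4' : Function.Injective (fun y : ℕ×ℕ×ℕ => ((1:ℕ), y.1, y.2.1, y.2.2)) := by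
  rintro ⟨a,b,c⟩ ⟨a',b',c'⟩ h; simp_all [Prod.ext_iff]

lemma disj4 (n : ℕ) : Disjoint ((T4 n).image (fun x => (x.1+1, x.2.1+1, x.2.2.1+1, x.2.2.2+1)))
    ((T3 (n+3)).image (fun y => ((1:ℕ), y.1, y.2.1, y.2.2))) := by
  rw [disjoint_left]
  rintro ⟨a,b,c,d⟩ h1 h2
  simp only [mem_image, Prod.mk.injEq, Prod.exists] at h1 h2
  obtain ⟨x, y, z, u, hx, rfl, rfl, rfl, rfl⟩ := h1
  obtain ⟨p, q, r, hp, h, -, -, -⟩ := h2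
  have := mem_T4 hx
  omega

lemma rP4 (n : ℕ) : PP4 (n+4) = PP4 n + PP3 (n+3) := by
  rw [PP4, T4_split, card_union_of_disjoint (disj4 n), card_image_of_injective _ inj4,
    card_image_of_injective _ inj4', PP4, PP3]

lemma rS4 (n : ℕ) : SS4 (n+4) = SS4 n + (3*n+6) * PP4 n + SS3 (n+3) + (n+3) * PP3 (n+3) := by
  rw [SS4, T4_split, sum_union (disj4 n), sum_image (fun a _ b _ h => inj4 h),
    sum_image (fun a _ b _ h => inj4' h)]
  have e1 : ∀ x ∈ T4 n, w4 (x.1+1) (x.2.1+1) (x.2.2.1+1) (x.2.2.2+1) =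
      w4 x.1 x.2.1 x.2.2.1 x.2.2.2 + (3*n+6) := by
    intro x hx; have h := mem_T4 hx
    simp only [w4]; nlinarith [h.2.2.2.2]
  have e2 : ∀ y ∈ T3 (n+3), w4 1 y.1 y.2.1 y.2.2 = w3 y.1 y.2.1 y.2.2 + (n+3) := by
    intro y hy; have h := mem_T3 hy
    simp only [w4, w3]; nlinarith [h.2.2.2]
  rw [sum_congr rfl e1, sum_congr rfl e2]
  simp only [sum_add_distrib, sum_const, smul_eq_mul, SS4, SS3, PP4, PP3]
  ring

theorem vP2_0 : PP2 0 = 0 := by decide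
theorem vS2_0 : SS2 0 = 0 := by decide
theorem vP2_1 : PP2 1 = 0 := by decide
theorem vS2_1 : SS2 1 = 0 := by decide
theorem vP3_0 : PP3 0 = 0 := by decide
theorem vS3_0 : SS3 0 = 0 := by decide
theorem vP3_1 : PP3 1 = 0 := by decide
theorem vS3_1 : SS3 1 = 0 := by decide
theorem vP3_2 : PP3 2 = 0 := by decide
theorem vS3_2 : SS3 2 = 0 := by decide
theorem vP4_0 : PP4 0 = 0 := by decide
theorem vS4_0 : SS4 0 = 0 := by decide
theorem vP4_1 : PP4 1 = 0 := by decide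
theorem vS4_1 : SS4 1 = 0 := by decide
theorem vP4_2 : PP4 2 = 0 := by decide
theorem vS4_2 : SS4 2 = 0 := by decide
theorem vP4_3 : PP4 3 = 0 := by decide
theorem vS4_3 : SS4 3 = 0 := by decide
theorem vP2_2 : PP2 2 = 1 := by have h := rP2 0; norm_num [vP2_0] at h; exact h
theorem vS2_2 : SS2 2 = 1 := by have h := rS2 0; norm_num [vS2_0, vP2_0] at h; exact h
theorem vP2_3 : PP2 3 = 1 := by have h := rP2 1; norm_num [vP2_1] at h; exact h
theorem vS2_3 : SS2 3 = 2 := by have h := rS2 1; norm_num [vS2_1, vP2_1] at h; exact h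
theorem vP2_4 : PP2 4 = 2 := by have h := rP2 2; norm_num [vP2_2] at h; exact h
theorem vS2_4 : SS2 4 = 7 := by have h := rS2 2; norm_num [vS2_2, vP2_2] at h; exact h
theorem vP2_5 : PP2 5 = 2 := by have h := rP2 3; norm_num [vP2_3] at h; exact h
theorem vS2_5 : SS2 5 = 10 := by have h := rS2 3; norm_num [vS2_3, vP2_3] at h; exact h
theorem vP2_6 : PP2 6 = 3 := by have h := rP2 4; norm_num [vP2_4] at h; exact h
theorem vS2_6 : SS2 6 = 22 := by have h := rS2 4; norm_num [vS2_4, vP2_4] at h; exact h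
theorem vP2_7 : PP2 7 = 3 := by have h := rP2 5; norm_num [vP2_5] at h; exact h
theorem vS2_7 : SS2 7 = 28 := by have h := rS2 5; norm_num [vS2_5, vP2_5] at h; exact h
theorem vP2_8 : PP2 8 = 4 := by have h := rP2 6; norm_num [vP2_6] at h; exact h
theorem vS2_8 : SS2 8 = 50 := by have h := rS2 6; norm_num [vS2_6, vP2_6] at h; exact h
theorem vP2_9 : PP2 9 = 4 := by have h := rP2 7; norm_num [vP2_7] at h; exact h
theorem vS2_9 : SS2 9 = 60 := by have h := rS2 7; norm_num [vS2_7, vP2_7] at h; exact h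
theorem vP2_10 : PP2 10 = 5 := by have h := rP2 8; norm_num [vP2_8] at h; exact h
theorem vS2_10 : SS2 10 = 95 := by have h := rS2 8; norm_num [vS2_8, vP2_8] at h; exact h
theorem vP2_11 : PP2 11 = 5 := by have h := rP2 9; norm_num [vP2_9] at h; exact h
theorem vS2_11 : SS2 11 = 110 := by have h := rS2 9; norm_num [vS2_9, vP2_9] at h; exact h
theorem vP2_12 : PP2 12 = 6 := by have h := rP2 10; norm_num [vP2_10] at h; exact h
theorem vS2_12 : SS2 12 = 161 := by have h := rS2 10; norm_num [vS2_10, vP2_10] at h; exact h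
theorem vP2_13 : PP2 13 = 6 := by have h := rP2 11; norm_num [vP2_11] at h; exact h
theorem vS2_13 : SS2 13 = 182 := by have h := rS2 11; norm_num [vS2_11, vP2_11] at h; exact h
theorem vP2_14 : PP2 14 = 7 := by have h := rP2 12; norm_num [vP2_12] at h; exact h
theorem vS2_14 : SS2 14 = 252 := by have h := rS2 12; norm_num [vS2_12, vP2_12] at h; exact h
theorem vP2_15 : PP2 15 = 7 := by have h := rP2 13; norm_num [vP2_13] at h; exact h
theorem vS2_15 : SS2 15 = 280 := by have h := rS2 13; norm_num [vS2_13, vP2_13] at h; exact h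
theorem vP2_16 : PP2 16 = 8 := by have h := rP2 14; norm_num [vP2_14] at h; exact h
theorem vS2_16 : SS2 16 = 372 := by have h := rS2 14; norm_num [vS2_14, vP2_14] at h; exact h
theorem vP2_17 : PP2 17 = 8 := by have h := rP2 15; norm_num [vP2_15] at h; exact h
theorem vS2_17 : SS2 17 = 408 := by have h := rS2 15; norm_num [vS2_15, vP2_15] at h; exact h
theorem vP2_18 : PP2 18 = 9 := by have h := rP2 16; norm_num [vP2_16] at h; exact h
theorem vS2_18 : SS2 18 = 525 := by have h := rS2 16; norm_num [vS2_16, vP2_16] at h; exact h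
theorem vP2_19 : PP2 19 = 9 := by have h := rP2 17; norm_num [vP2_17] at h; exact h
theorem vS2_19 : SS2 19 = 570 := by have h := rS2 17; norm_num [vS2_17, vP2_17] at h; exact h
theorem vP2_20 : PP2 20 = 10 := by have h := rP2 18; norm_num [vP2_18] at h; exact h
theorem vS2_20 : SS2 20 = 715 := by have h := rS2 18; norm_num [vS2_18, vP2_18] at h; exact h
theorem vP2_21 : PP2 21 = 10 := by have h := rP2 19; norm_num [vP2_19] at h; exact h
theorem vS2_21 : SS2 21 = 770 := by have h := rS2 19; norm_num [vS2_19, vP2_19] at h; exact h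
theorem vP2_22 : PP2 22 = 11 := by have h := rP2 20; norm_num [vP2_20] at h; exact h
theorem vS2_22 : SS2 22 = 946 := by have h := rS2 20; norm_num [vS2_20, vP2_20] at h; exact h
theorem vP2_23 : PP2 23 = 11 := by have h := rP2 21; norm_num [vP2_21] at h; exact h
theorem vS2_23 : SS2 23 = 1012 := by have h := rS2 21; norm_num [vS2_21, vP2_21] at h; exact h
theorem vP2_24 : PP2 24 = 12 := by have h := rP2 22; norm_num [vP2_22] at h; exact h
theorem vS2_24 : SS2 24 = 1222 := by have h := rS2 22; norm_num [vS2_22, vP2_22] at h; exact h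
theorem vP2_25 : PP2 25 = 12 := by have h := rP2 23; norm_num [vP2_23] at h; exact h
theorem vS2_25 : SS2 25 = 1300 := by have h := rS2 23; norm_num [vS2_23, vP2_23] at h; exact h
theorem vP2_26 : PP2 26 = 13 := by have h := rP2 24; norm_num [vP2_24] at h; exact h
theorem vS2_26 : SS2 26 = 1547 := by have h := rS2 24; norm_num [vS2_24, vP2_24] at h; exact h
theorem vP2_27 : PP2 27 = 13 := by have h := rP2 25; norm_num [vP2_25] at h; exact h
theorem vS2_27 : SS2 27 = 1638 := by have h := rS2 25; norm_num [vS2_25, vP2_25] at h; exact h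
theorem vP2_28 : PP2 28 = 14 := by have h := rP2 26; norm_num [vP2_26] at h; exact h
theorem vS2_28 : SS2 28 = 1925 := by have h := rS2 26; norm_num [vS2_26, vP2_26] at h; exact h
theorem vP2_29 : PP2 29 = 14 := by have h := rP2 27; norm_num [vP2_27] at h; exact h
theorem vS2_29 : SS2 29 = 2030 := by have h := rS2 27; norm_num [vS2_27, vP2_27] at h; exact h
theorem vP2_30 : PP2 30 = 15 := by have h := rP2 28; norm_num [vP2_28] at h; exact h
theorem vS2_30 : SS2 30 = 2360 := by have h := rS2 28; norm_num [vS2_28, vP2_28] at h; exact h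
theorem vP2_31 : PP2 31 = 15 := by have h := rP2 29; norm_num [vP2_29] at h; exact h
theorem vS2_31 : SS2 31 = 2480 := by have h := rS2 29; norm_num [vS2_29, vP2_29] at h; exact h
theorem vP2_32 : PP2 32 = 16 := by have h := rP2 30; norm_num [vP2_30] at h; exact h
theorem vS2_32 : SS2 32 = 2856 := by have h := rS2 30; norm_num [vS2_30, vP2_30] at h; exact h
theorem vP2_33 : PP2 33 = 16 := by have h := rP2 31; norm_num [vP2_31] at h; exact h
theorem vS2_33 : SS2 33 = 2992 := by have h := rS2 31; norm_num [vS2_31, vP2_31] at h; exact h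
theorem vP2_34 : PP2 34 = 17 := by have h := rP2 32; norm_num [vP2_32] at h; exact h
theorem vS2_34 : SS2 34 = 3417 := by have h := rS2 32; norm_num [vS2_32, vP2_32] at h; exact h
theorem vP2_35 : PP2 35 = 17 := by have h := rP2 33; norm_num [vP2_33] at h; exact h
theorem vS2_35 : SS2 35 = 3570 := by have h := rS2 33; norm_num [vS2_33, vP2_33] at h; exact h
theorem vP2_36 : PP2 36 = 18 := by have h := rP2 34; norm_num [vP2_34] at h; exact h
theorem vS2_36 : SS2 36 = 4047 := by have h := rS2 34; norm_num [vS2_34, vP2_34] at h; exact h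
theorem vP2_37 : PP2 37 = 18 := by have h := rP2 35; norm_num [vP2_35] at h; exact h
theorem vS2_37 : SS2 37 = 4218 := by have h := rS2 35; norm_num [vS2_35, vP2_35] at h; exact h
theorem vP2_38 : PP2 38 = 19 := by have h := rP2 36; norm_num [vP2_36] at h; exact h
theorem vS2_38 : SS2 38 = 4750 := by have h := rS2 36; norm_num [vS2_36, vP2_36] at h; exact h
theorem vP2_39 : PP2 39 = 19 := by have h := rP2 37; norm_num [vP2_37] at h; exact h
theorem vS2_39 : SS2 39 = 4940 := by have h := rS2 37; norm_num [vS2_37, vP2_37] at h; exact h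
theorem vP2_40 : PP2 40 = 20 := by have h := rP2 38; norm_num [vP2_38] at h; exact h
theorem vS2_40 : SS2 40 = 5530 := by have h := rS2 38; norm_num [vS2_38, vP2_38] at h; exact h
theorem vP2_41 : PP2 41 = 20 := by have h := rP2 39; norm_num [vP2_39] at h; exact h
theorem vS2_41 : SS2 41 = 5740 := by have h := rS2 39; norm_num [vS2_39, vP2_39] at h; exact h
theorem vP2_42 : PP2 42 = 21 := by have h := rP2 40; norm_num [vP2_40] at h; exact h
theorem vS2_42 : SS2 42 = 6391 := by have h := rS2 40; norm_num [vS2_40, vP2_40] at h; exact h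
theorem vP2_43 : PP2 43 = 21 := by have h := rP2 41; norm_num [vP2_41] at h; exact h
theorem vS2_43 : SS2 43 = 6622 := by have h := rS2 41; norm_num [vS2_41, vP2_41] at h; exact h
theorem vP2_44 : PP2 44 = 22 := by have h := rP2 42; norm_num [vP2_42] at h; exact h
theorem vS2_44 : SS2 44 = 7337 := by have h := rS2 42; norm_num [vS2_42, vP2_42] at h; exact h
theorem vP2_45 : PP2 45 = 22 := by have h := rP2 43; norm_num [vP2_43] at h; exact h
theorem vS2_45 : SS2 45 = 7590 := by have h := rS2 43; norm_num [vS2_43, vP2_43] at h; exact h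
theorem vP2_46 : PP2 46 = 23 := by have h := rP2 44; norm_num [vP2_44] at h; exact h
theorem vS2_46 : SS2 46 = 8372 := by have h := rS2 44; norm_num [vS2_44, vP2_44] at h; exact h
theorem vP2_47 : PP2 47 = 23 := by have h := rP2 45; norm_num [vP2_45] at h; exact h
theorem vS2_47 : SS2 47 = 8648 := by have h := rS2 45; norm_num [vS2_45, vP2_45] at h; exact h
theorem vP2_48 : PP2 48 = 24 := by have h := rP2 46; norm_num [vP2_46] at h; exact h
theorem vS2_48 : SS2 48 = 9500 := by have h := rS2 46; norm_num [vS2_46, vP2_46] at h; exact h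
theorem vP2_49 : PP2 49 = 24 := by have h := rP2 47; norm_num [vP2_47] at h; exact h
theorem vS2_49 : SS2 49 = 9800 := by have h := rS2 47; norm_num [vS2_47, vP2_47] at h; exact h
theorem vP2_50 : PP2 50 = 25 := by have h := rP2 48; norm_num [vP2_48] at h; exact h
theorem vS2_50 : SS2 50 = 10725 := by have h := rS2 48; norm_num [vS2_48, vP2_48] at h; exact h
theorem vP2_51 : PP2 51 = 25 := by have h := rP2 49; norm_num [vP2_49] at h; exact h
theorem vS2_51 : SS2 51 = 11050 := by have h := rS2 49; norm_num [vS2_49, vP2_49] at h; exact h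
theorem vP2_52 : PP2 52 = 26 := by have h := rP2 50; norm_num [vP2_50] at h; exact h
theorem vS2_52 : SS2 52 = 12051 := by have h := rS2 50; norm_num [vS2_50, vP2_50] at h; exact h
theorem vP2_53 : PP2 53 = 26 := by have h := rP2 51; norm_num [vP2_51] at h; exact h
theorem vS2_53 : SS2 53 = 12402 := by have h := rS2 51; norm_num [vS2_51, vP2_51] at h; exact h
theorem vP2_54 : PP2 54 = 27 := by have h := rP2 52; norm_num [vP2_52] at h; exact h
theorem vS2_54 : SS2 54 = 13482 := by have h := rS2 52; norm_num [vS2_52, vP2_52] at h; exact h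
theorem vP2_55 : PP2 55 = 27 := by have h := rP2 53; norm_num [vP2_53] at h; exact h
theorem vS2_55 : SS2 55 = 13860 := by have h := rS2 53; norm_num [vS2_53, vP2_53] at h; exact h
theorem vP2_56 : PP2 56 = 28 := by have h := rP2 54; norm_num [vP2_54] at h; exact h
theorem vS2_56 : SS2 56 = 15022 := by have h := rS2 54; norm_num [vS2_54, vP2_54] at h; exact h
theorem vP2_57 : PP2 57 = 28 := by have h := rP2 55; norm_num [vP2_55] at h; exact h
theorem vS2_57 : SS2 57 = 15428 := by have h := rS2 55; norm_num [vS2_55, vP2_55] at h; exact h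
theorem vP3_3 : PP3 3 = 1 := by have h := rP3 0; norm_num [vP3_0, vP2_2] at h; exact h
theorem vS3_3 : SS3 3 = 3 := by have h := rS3 0; norm_num [vS3_0, vP3_0, vS2_2, vP2_2] at h; exact h
theorem vP3_4 : PP3 4 = 1 := by have h := rP3 1; norm_num [vP3_1, vP2_3] at h; exact h
theorem vS3_4 : SS3 4 = 5 := by have h := rS3 1; norm_num [vS3_1, vP3_1, vS2_3, vP2_3] at h; exact h
theorem vP3_5 : PP3 5 = 2 := by have h := rP3 2; norm_num [vP3_2, vP2_4] at h; exact h
theorem vS3_5 : SS3 5 = 15 := by have h := rS3 2; norm_num [vS3_2, vP3_2, vS2_4, vP2_4] at h; exact h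
theorem vP3_6 : PP3 6 = 3 := by have h := rP3 3; norm_num [vP3_3, vP2_5] at h; exact h
theorem vS3_6 : SS3 6 = 32 := by have h := rS3 3; norm_num [vS3_3, vP3_3, vS2_5, vP2_5] at h; exact h
theorem vP3_7 : PP3 7 = 4 := by have h := rP3 4; norm_num [vP3_4, vP2_6] at h; exact h
theorem vS3_7 : SS3 7 = 56 := by have h := rS3 4; norm_num [vS3_4, vP3_4, vS2_6, vP2_6] at h; exact h
theorem vP3_8 : PP3 8 = 5 := by have h := rP3 5; norm_num [vP3_5, vP2_7] at h; exact h
theorem vS3_8 : SS3 8 = 90 := by have h := rS3 5; norm_num [vS3_5, vP3_5, vS2_7, vP2_7] at h; exact h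
theorem vP3_9 : PP3 9 = 7 := by have h := rP3 6; norm_num [vP3_6, vP2_8] at h; exact h
theorem vS3_9 : SS3 9 = 159 := by have h := rS3 6; norm_num [vS3_6, vP3_6, vS2_8, vP2_8] at h; exact h
theorem vP3_10 : PP3 10 = 8 := by have h := rP3 7; norm_num [vP3_7, vP2_9] at h; exact h
theorem vS3_10 : SS3 10 = 220 := by have h := rS3 7; norm_num [vS3_7, vP3_7, vS2_9, vP2_9] at h; exact h
theorem vP3_11 : PP3 11 = 10 := by have h := rP3 8; norm_num [vP3_8, vP2_10] at h; exact h
theorem vS3_11 : SS3 11 = 330 := by have h := rS3 8; norm_num [vS3_8, vP3_8, vS2_10, vP2_10] at h; exact h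
theorem vP3_12 : PP3 12 = 12 := by have h := rP3 9; norm_num [vP3_9, vP2_11] at h; exact h
theorem vS3_12 : SS3 12 = 471 := by have h := rS3 9; norm_num [vS3_9, vP3_9, vS2_11, vP2_11] at h; exact h
theorem vP3_13 : PP3 13 = 14 := by have h := rP3 10; norm_num [vP3_10, vP2_12] at h; exact h
theorem vS3_13 : SS3 13 = 637 := by have h := rS3 10; norm_num [vS3_10, vP3_10, vS2_12, vP2_12] at h; exact h
theorem vP3_14 : PP3 14 = 16 := by have h := rP3 11; norm_num [vP3_11, vP2_13] at h; exact h
theorem vS3_14 : SS3 14 = 840 := by have h := rS3 11; norm_num [vS3_11, vP3_11, vS2_13, vP2_13] at h; exact h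
theorem vP3_15 : PP3 15 = 19 := by have h := rP3 12; norm_num [vP3_12, vP2_14] at h; exact h
theorem vS3_15 : SS3 15 = 1145 := by have h := rS3 12; norm_num [vS3_12, vP3_12, vS2_14, vP2_14] at h; exact h
theorem vP3_16 : PP3 16 = 21 := by have h := rP3 13; norm_num [vP3_13, vP2_15] at h; exact h
theorem vS3_16 : SS3 16 = 1428 := by have h := rS3 13; norm_num [vS3_13, vP3_13, vS2_15, vP2_15] at h; exact h
theorem vP3_17 : PP3 17 = 24 := by have h := rP3 14; norm_num [vP3_14, vP2_16] at h; exact h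
theorem vS3_17 : SS3 17 = 1836 := by have h := rS3 14; norm_num [vS3_14, vP3_14, vS2_16, vP2_16] at h; exact h
theorem vP3_18 : PP3 18 = 27 := by have h := rP3 15; norm_num [vP3_15, vP2_17] at h; exact h
theorem vS3_18 : SS3 18 = 2316 := by have h := rS3 15; norm_num [vS3_15, vP3_15, vS2_17, vP2_17] at h; exact h
theorem vP3_19 : PP3 19 = 30 := by have h := rP3 16; norm_num [vP3_16, vP2_18] at h; exact h
theorem vS3_19 : SS3 19 = 2850 := by have h := rS3 16; norm_num [vS3_16, vP3_16, vS2_18, vP2_18] at h; exact h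
theorem vP3_20 : PP3 20 = 33 := by have h := rP3 17; norm_num [vP3_17, vP2_19] at h; exact h
theorem vS3_20 : SS3 20 = 3465 := by have h := rS3 17; norm_num [vS3_17, vP3_17, vS2_19, vP2_19] at h; exact h
theorem vP3_21 : PP3 21 = 37 := by have h := rP3 18; norm_num [vP3_18, vP2_20] at h; exact h
theorem vS3_21 : SS3 21 = 4284 := by have h := rS3 18; norm_num [vS3_18, vP3_18, vS2_20, vP2_20] at h; exact h
theorem vP3_22 : PP3 22 = 40 := by have h := rP3 19; norm_num [vP3_19, vP2_21] at h; exact h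
theorem vS3_22 : SS3 22 = 5060 := by have h := rS3 19; norm_num [vS3_19, vP3_19, vS2_21, vP2_21] at h; exact h
theorem vP3_23 : PP3 23 = 44 := by have h := rP3 20; norm_num [vP3_20, vP2_22] at h; exact h
theorem vS3_23 : SS3 23 = 6072 := by have h := rS3 20; norm_num [vS3_20, vP3_20, vS2_22, vP2_22] at h; exact h
theorem vP3_24 : PP3 24 = 48 := by have h := rP3 21; norm_num [vP3_21, vP2_23] at h; exact h
theorem vS3_24 : SS3 24 = 7214 := by have h := rS3 21; norm_num [vS3_21, vP3_21, vS2_23, vP2_23] at h; exact h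
theorem vP3_25 : PP3 25 = 52 := by have h := rP3 22; norm_num [vP3_22, vP2_24] at h; exact h
theorem vS3_25 : SS3 25 = 8450 := by have h := rS3 22; norm_num [vS3_22, vP3_22, vS2_24, vP2_24] at h; exact h
theorem vP3_26 : PP3 26 = 56 := by have h := rP3 23; norm_num [vP3_23, vP2_25] at h; exact h
theorem vS3_26 : SS3 26 = 9828 := by have h := rS3 23; norm_num [vS3_23, vP3_23, vS2_25, vP2_25] at h; exact h
theorem vP3_27 : PP3 27 = 61 := by have h := rP3 24; norm_num [vP3_24, vP2_26] at h; exact h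
theorem vS3_27 : SS3 27 = 11547 := by have h := rS3 24; norm_num [vS3_24, vP3_24, vS2_26, vP2_26] at h; exact h
theorem vP3_28 : PP3 28 = 65 := by have h := rP3 25; norm_num [vP3_25, vP2_27] at h; exact h
theorem vS3_28 : SS3 28 = 13195 := by have h := rS3 25; norm_num [vS3_25, vP3_25, vS2_27, vP2_27] at h; exact h
theorem vP3_29 : PP3 29 = 70 := by have h := rP3 26; norm_num [vP3_26, vP2_28] at h; exact h
theorem vS3_29 : SS3 29 = 15225 := by have h := rS3 26; norm_num [vS3_26, vP3_26, vS2_28, vP2_28] at h; exact h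
theorem vP3_30 : PP3 30 = 75 := by have h := rP3 27; norm_num [vP3_27, vP2_29] at h; exact h
theorem vS3_30 : SS3 30 = 17460 := by have h := rS3 27; norm_num [vS3_27, vP3_27, vS2_29, vP2_29] at h; exact h
theorem vP3_31 : PP3 31 = 80 := by have h := rP3 28; norm_num [vP3_28, vP2_30] at h; exact h
theorem vS3_31 : SS3 31 = 19840 := by have h := rS3 28; norm_num [vS3_28, vP3_28, vS2_30, vP2_30] at h; exact h
theorem vP3_32 : PP3 32 = 85 := by have h := rP3 29; norm_num [vP3_29, vP2_31] at h; exact h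
theorem vS3_32 : SS3 32 = 22440 := by have h := rS3 29; norm_num [vS3_29, vP3_29, vS2_31, vP2_31] at h; exact h
theorem vP3_33 : PP3 33 = 91 := by have h := rP3 30; norm_num [vP3_30, vP2_32] at h; exact h
theorem vS3_33 : SS3 33 = 25553 := by have h := rS3 30; norm_num [vS3_30, vP3_30, vS2_32, vP2_32] at h; exact h
theorem vP3_34 : PP3 34 = 96 := by have h := rP3 31; norm_num [vP3_31, vP2_33] at h; exact h
theorem vS3_34 : SS3 34 = 28560 := by have h := rS3 31; norm_num [vS3_31, vP3_31, vS2_33, vP2_33] at h; exact h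
theorem vP3_35 : PP3 35 = 102 := by have h := rP3 32; norm_num [vP3_32, vP2_34] at h; exact h
theorem vS3_35 : SS3 35 = 32130 := by have h := rS3 32; norm_num [vS3_32, vP3_32, vS2_34, vP2_34] at h; exact h
theorem vP3_36 : PP3 36 = 108 := by have h := rP3 33; norm_num [vP3_33, vP2_35] at h; exact h
theorem vS3_36 : SS3 36 = 35997 := by have h := rS3 33; norm_num [vS3_33, vP3_33, vS2_35, vP2_35] at h; exact h
theorem vP3_37 : PP3 37 = 114 := by have h := rP3 34; norm_num [vP3_34, vP2_36] at h; exact h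
theorem vS3_37 : SS3 37 = 40071 := by have h := rS3 34; norm_num [vS3_34, vP3_34, vS2_36, vP2_36] at h; exact h
theorem vP3_38 : PP3 38 = 120 := by have h := rP3 35; norm_num [vP3_35, vP2_37] at h; exact h
theorem vS3_38 : SS3 38 = 44460 := by have h := rS3 35; norm_num [vS3_35, vP3_35, vS2_37, vP2_37] at h; exact h
theorem vP3_39 : PP3 39 = 127 := by have h := rP3 36; norm_num [vP3_36, vP2_38] at h; exact h
theorem vS3_39 : SS3 39 = 49569 := by have h := rS3 36; norm_num [vS3_36, vP3_36, vS2_38, vP2_38] at h; exact h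
theorem vP3_40 : PP3 40 = 133 := by have h := rP3 37; norm_num [vP3_37, vP2_39] at h; exact h
theorem vS3_40 : SS3 40 = 54530 := by have h := rS3 37; norm_num [vS3_37, vP3_37, vS2_39, vP2_39] at h; exact h
theorem vP3_41 : PP3 41 = 140 := by have h := rP3 38; norm_num [vP3_38, vP2_40] at h; exact h
theorem vS3_41 : SS3 41 = 60270 := by have h := rS3 38; norm_num [vS3_38, vP3_38, vS2_40, vP2_40] at h; exact h
theorem vP3_42 : PP3 42 = 147 := by have h := rP3 39; norm_num [vP3_39, vP2_41] at h; exact h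
theorem vS3_42 : SS3 42 = 66416 := by have h := rS3 39; norm_num [vS3_39, vP3_39, vS2_41, vP2_41] at h; exact h
theorem vP3_43 : PP3 43 = 154 := by have h := rP3 40; norm_num [vP3_40, vP2_42] at h; exact h
theorem vS3_43 : SS3 43 = 72842 := by have h := rS3 40; norm_num [vS3_40, vP3_40, vS2_42, vP2_42] at h; exact h
theorem vP3_44 : PP3 44 = 161 := by have h := rP3 41; norm_num [vP3_41, vP2_43] at h; exact h
theorem vS3_44 : SS3 44 = 79695 := by have h := rS3 41; norm_num [vS3_41, vP3_41, vS2_43, vP2_43] at h; exact h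
theorem vP3_45 : PP3 45 = 169 := by have h := rP3 42; norm_num [vP3_42, vP2_44] at h; exact h
theorem vS3_45 : SS3 45 = 87510 := by have h := rS3 42; norm_num [vS3_42, vP3_42, vS2_44, vP2_44] at h; exact h
theorem vP3_46 : PP3 46 = 176 := by have h := rP3 43; norm_num [vP3_43, vP2_45] at h; exact h
theorem vS3_46 : SS3 46 = 95128 := by have h := rS3 43; norm_num [vS3_43, vP3_43, vS2_45, vP2_45] at h; exact h
theorem vP3_47 : PP3 47 = 184 := by have h := rP3 44; norm_num [vP3_44, vP2_46] at h; exact h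
theorem vS3_47 : SS3 47 = 103776 := by have h := rS3 44; norm_num [vS3_44, vP3_44, vS2_46, vP2_46] at h; exact h
theorem vP3_48 : PP3 48 = 192 := by have h := rP3 45; norm_num [vP3_45, vP2_47] at h; exact h
theorem vS3_48 : SS3 48 = 112956 := by have h := rS3 45; norm_num [vS3_45, vP3_45, vS2_47, vP2_47] at h; exact h
theorem vP3_49 : PP3 49 = 200 := by have h := rP3 46; norm_num [vP3_46, vP2_48] at h; exact h
theorem vS3_49 : SS3 49 = 122500 := by have h := rS3 46; norm_num [vS3_46, vP3_46, vS2_48, vP2_48] at h; exact h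
theorem vP3_50 : PP3 50 = 208 := by have h := rP3 47; norm_num [vP3_47, vP2_49] at h; exact h
theorem vS3_50 : SS3 50 = 132600 := by have h := rS3 47; norm_num [vS3_47, vP3_47, vS2_49, vP2_49] at h; exact h
theorem vP3_51 : PP3 51 = 217 := by have h := rP3 48; norm_num [vP3_48, vP2_50] at h; exact h
theorem vS3_51 : SS3 51 = 143939 := by have h := rS3 48; norm_num [vS3_48, vP3_48, vS2_50, vP2_50] at h; exact h
theorem vP3_52 : PP3 52 = 225 := by have h := rP3 49; norm_num [vP3_49, vP2_51] at h; exact h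
theorem vS3_52 : SS3 52 = 155025 := by have h := rS3 49; norm_num [vS3_49, vP3_49, vS2_51, vP2_51] at h; exact h
theorem vP3_53 : PP3 53 = 234 := by have h := rP3 50; norm_num [vP3_50, vP2_52] at h; exact h
theorem vS3_53 : SS3 53 = 167427 := by have h := rS3 50; norm_num [vS3_50, vP3_50, vS2_52, vP2_52] at h; exact h
theorem vP3_54 : PP3 54 = 243 := by have h := rP3 51; norm_num [vP3_51, vP2_53] at h; exact h
theorem vS3_54 : SS3 54 = 180504 := by have h := rS3 51; norm_num [vS3_51, vP3_51, vS2_53, vP2_53] at h; exact h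
theorem vP3_55 : PP3 55 = 252 := by have h := rP3 52; norm_num [vP3_52, vP2_54] at h; exact h
theorem vS3_55 : SS3 55 = 194040 := by have h := rS3 52; norm_num [vS3_52, vP3_52, vS2_54, vP2_54] at h; exact h
theorem vP3_56 : PP3 56 = 261 := by have h := rP3 53; norm_num [vP3_53, vP2_55] at h; exact h
theorem vS3_56 : SS3 56 = 208278 := by have h := rS3 53; norm_num [vS3_53, vP3_53, vS2_55, vP2_55] at h; exact h
theorem vP3_57 : PP3 57 = 271 := by have h := rP3 54; norm_num [vP3_54, vP2_56] at h; exact h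
theorem vS3_57 : SS3 57 = 224067 := by have h := rS3 54; norm_num [vS3_54, vP3_54, vS2_56, vP2_56] at h; exact h
theorem vP4_4 : PP4 4 = 1 := by have h := rP4 0; norm_num [vP4_0, vP3_3] at h; exact h
theorem vS4_4 : SS4 4 = 6 := by have h := rS4 0; norm_num [vS4_0, vP4_0, vS3_3, vP3_3] at h; exact h
theorem vP4_5 : PP4 5 = 1 := by have h := rP4 1; norm_num [vP4_1, vP3_4] at h; exact h
theorem vS4_5 : SS4 5 = 9 := by have h := rS4 1; norm_num [vS4_1, vP4_1, vS3_4, vP3_4] at h; exact h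
theorem vP4_6 : PP4 6 = 2 := by have h := rP4 2; norm_num [vP4_2, vP3_5] at h; exact h
theorem vS4_6 : SS4 6 = 25 := by have h := rS4 2; norm_num [vS4_2, vP4_2, vS3_5, vP3_5] at h; exact h
theorem vP4_7 : PP4 7 = 3 := by have h := rP4 3; norm_num [vP4_3, vP3_6] at h; exact h
theorem vS4_7 : SS4 7 = 50 := by have h := rS4 3; norm_num [vS4_3, vP4_3, vS3_6, vP3_6] at h; exact h
theorem vP4_8 : PP4 8 = 5 := by have h := rP4 4; norm_num [vP4_4, vP3_7] at h; exact h
theorem vS4_8 : SS4 8 = 108 := by have h := rS4 4; norm_num [vS4_4, vP4_4, vS3_7, vP3_7] at h; exact h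
theorem vP4_9 : PP4 9 = 6 := by have h := rP4 5; norm_num [vP4_5, vP3_8] at h; exact h
theorem vS4_9 : SS4 9 = 160 := by have h := rS4 5; norm_num [vS4_5, vP4_5, vS3_8, vP3_8] at h; exact h
theorem vP4_10 : PP4 10 = 9 := by have h := rP4 6; norm_num [vP4_6, vP3_9] at h; exact h
theorem vS4_10 : SS4 10 = 295 := by have h := rS4 6; norm_num [vS4_6, vP4_6, vS3_9, vP3_9] at h; exact h
theorem vP4_11 : PP4 11 = 11 := by have h := rP4 7; norm_num [vP4_7, vP3_10] at h; exact h
theorem vS4_11 : SS4 11 = 431 := by have h := rS4 7; norm_num [vS4_7, vP4_7, vS3_10, vP3_10] at h; exact h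
theorem vP4_12 : PP4 12 = 15 := by have h := rP4 8; norm_num [vP4_8, vP3_11] at h; exact h
theorem vS4_12 : SS4 12 = 698 := by have h := rS4 8; norm_num [vS4_8, vP4_8, vS3_11, vP3_11] at h; exact h
theorem vP4_13 : PP4 13 = 18 := by have h := rP4 9; norm_num [vP4_9, vP3_12] at h; exact h
theorem vS4_13 : SS4 13 = 973 := by have h := rS4 9; norm_num [vS4_9, vP4_9, vS3_12, vP3_12] at h; exact h
theorem vP4_14 : PP4 14 = 23 := by have h := rP4 10; norm_num [vP4_10, vP3_13] at h; exact h
theorem vS4_14 : SS4 14 = 1438 := by have h := rS4 10; norm_num [vS4_10, vP4_10, vS3_13, vP3_13] at h; exact h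
theorem vP4_15 : PP4 15 = 27 := by have h := rP4 11; norm_num [vP4_11, vP3_14] at h; exact h
theorem vS4_15 : SS4 15 = 1924 := by have h := rS4 11; norm_num [vS4_11, vP4_11, vS3_14, vP3_14] at h; exact h
theorem vP4_16 : PP4 16 = 34 := by have h := rP4 12; norm_num [vP4_12, vP3_15] at h; exact h
theorem vS4_16 : SS4 16 = 2758 := by have h := rS4 12; norm_num [vS4_12, vP4_12, vS3_15, vP3_15] at h; exact h
theorem vP4_17 : PP4 17 = 39 := by have h := rP4 13; norm_num [vP4_13, vP3_16] at h; exact h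
theorem vS4_17 : SS4 17 = 3547 := by have h := rS4 13; norm_num [vS4_13, vP4_13, vS3_16, vP3_16] at h; exact h
theorem vP4_18 : PP4 18 = 47 := by have h := rP4 14; norm_num [vP4_14, vP3_17] at h; exact h
theorem vS4_18 : SS4 18 = 4786 := by have h := rS4 14; norm_num [vS4_14, vP4_14, vS3_17, vP3_17] at h; exact h
theorem vP4_19 : PP4 19 = 54 := by have h := rP4 15; norm_num [vP4_15, vP3_18] at h; exact h
theorem vS4_19 : SS4 19 = 6103 := by have h := rS4 15; norm_num [vS4_15, vP4_15, vS3_18, vP3_18] at h; exact h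
theorem vP4_20 : PP4 20 = 64 := by have h := rP4 16; norm_num [vP4_16, vP3_19] at h; exact h
theorem vS4_20 : SS4 20 = 8014 := by have h := rS4 16; norm_num [vS4_16, vP4_16, vS3_19, vP3_19] at h; exact h
theorem vP4_21 : PP4 21 = 72 := by have h := rP4 17; norm_num [vP4_17, vP3_20] at h; exact h
theorem vS4_21 : SS4 21 = 9895 := by have h := rS4 17; norm_num [vS4_17, vP4_17, vS3_20, vP3_20] at h; exact h
theorem vP4_22 : PP4 22 = 84 := by have h := rP4 18; norm_num [vP4_18, vP3_21] at h; exact h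
theorem vS4_22 : SS4 22 = 12667 := by have h := rS4 18; norm_num [vS4_18, vP4_18, vS3_21, vP3_21] at h; exact h
theorem vP4_23 : PP4 23 = 94 := by have h := rP4 19; norm_num [vP4_19, vP3_22] at h; exact h
theorem vS4_23 : SS4 23 = 15445 := by have h := rS4 19; norm_num [vS4_19, vP4_19, vS3_22, vP3_22] at h; exact h
theorem vP4_24 : PP4 24 = 108 := by have h := rP4 20; norm_num [vP4_20, vP3_23] at h; exact h
theorem vS4_24 : SS4 24 = 19322 := by have h := rS4 20; norm_num [vS4_20, vP4_20, vS3_23, vP3_23] at h; exact h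
theorem vP4_25 : PP4 25 = 120 := by have h := rP4 21; norm_num [vP4_21, vP3_24] at h; exact h
theorem vS4_25 : SS4 25 = 23229 := by have h := rS4 21; norm_num [vS4_21, vP4_21, vS3_24, vP3_24] at h; exact h
theorem vP4_26 : PP4 26 = 136 := by have h := rP4 22; norm_num [vP4_22, vP3_25] at h; exact h
theorem vS4_26 : SS4 26 = 28465 := by have h := rS4 22; norm_num [vS4_22, vP4_22, vS3_25, vP3_25] at h; exact h
theorem vP4_27 : PP4 27 = 150 := by have h := rP4 23; norm_num [vP4_23, vP3_26] at h; exact h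
theorem vS4_27 : SS4 27 = 33779 := by have h := rS4 23; norm_num [vS4_23, vP4_23, vS3_26, vP3_26] at h; exact h
theorem vP4_28 : PP4 28 = 169 := by have h := rP4 24; norm_num [vP4_24, vP3_27] at h; exact h
theorem vS4_28 : SS4 28 = 40940 := by have h := rS4 24; norm_num [vS4_24, vP4_24, vS3_27, vP3_27] at h; exact h
theorem vP4_29 : PP4 29 = 185 := by have h := rP4 25; norm_num [vP4_25, vP3_28] at h; exact h
theorem vS4_29 : SS4 29 = 47964 := by have h := rS4 25; norm_num [vS4_25, vP4_25, vS3_28, vP3_28] at h; exact h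
theorem vP4_30 : PP4 30 = 206 := by have h := rP4 26; norm_num [vP4_26, vP3_29] at h; exact h
theorem vS4_30 : SS4 30 = 57144 := by have h := rS4 26; norm_num [vS4_26, vP4_26, vS3_29, vP3_29] at h; exact h
theorem vP4_31 : PP4 31 = 225 := by have h := rP4 27; norm_num [vP4_27, vP3_30] at h; exact h
theorem vS4_31 : SS4 31 = 66539 := by have h := rS4 27; norm_num [vS4_27, vP4_27, vS3_30, vP3_30] at h; exact h
theorem vP4_32 : PP4 32 = 249 := by have h := rP4 28; norm_num [vP4_28, vP3_31] at h; exact h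
theorem vS4_32 : SS4 32 = 78470 := by have h := rS4 28; norm_num [vS4_28, vP4_28, vS3_31, vP3_31] at h; exact h
theorem vP4_33 : PP4 33 = 270 := by have h := rP4 29; norm_num [vP4_29, vP3_32] at h; exact h
theorem vS4_33 : SS4 33 = 90329 := by have h := rS4 29; norm_num [vS4_29, vP4_29, vS3_32, vP3_32] at h; exact h
theorem vP4_34 : PP4 34 = 297 := by have h := rP4 30; norm_num [vP4_30, vP3_33] at h; exact h
theorem vS4_34 : SS4 34 = 105476 := by have h := rS4 30; norm_num [vS4_30, vP4_30, vS3_33, vP3_33] at h; exact h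
theorem vP4_35 : PP4 35 = 321 := by have h := rP4 31; norm_num [vP4_31, vP3_34] at h; exact h
theorem vS4_35 : SS4 35 = 120638 := by have h := rS4 31; norm_num [vS4_31, vP4_31, vS3_34, vP3_34] at h; exact h
theorem vP4_36 : PP4 36 = 351 := by have h := rP4 32; norm_num [vP4_32, vP3_35] at h; exact h
theorem vS4_36 : SS4 36 = 139568 := by have h := rS4 32; norm_num [vS4_32, vP4_32, vS3_35, vP3_35] at h; exact h
theorem vP4_37 : PP4 37 = 378 := by have h := rP4 33; norm_num [vP4_33, vP3_36] at h; exact h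
theorem vS4_37 : SS4 37 = 158564 := by have h := rS4 33; norm_num [vS4_33, vP4_33, vS3_36, vP3_36] at h; exact h
theorem vP4_38 : PP4 38 = 411 := by have h := rP4 34; norm_num [vP4_34, vP3_37] at h; exact h
theorem vS4_38 : SS4 38 = 181841 := by have h := rS4 34; norm_num [vS4_34, vP4_34, vS3_37, vP3_37] at h; exact h
theorem vP4_39 : PP4 39 = 441 := by have h := rP4 35; norm_num [vP4_35, vP3_38] at h; exact h
theorem vS4_39 : SS4 39 = 205289 := by have h := rS4 35; norm_num [vS4_35, vP4_35, vS3_38, vP3_38] at h; exact h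
theorem vP4_40 : PP4 40 = 478 := by have h := rP4 36; norm_num [vP4_36, vP3_39] at h; exact h
theorem vS4_40 : SS4 40 = 234104 := by have h := rS4 36; norm_num [vS4_36, vP4_36, vS3_39, vP3_39] at h; exact h
theorem vP4_41 : PP4 41 = 511 := by have h := rP4 37; norm_num [vP4_37, vP3_40] at h; exact h
theorem vS4_41 : SS4 41 = 262640 := by have h := rS4 37; norm_num [vS4_37, vP4_37, vS3_40, vP3_40] at h; exact h
theorem vP4_42 : PP4 42 = 551 := by have h := rP4 38; norm_num [vP4_38, vP3_41] at h; exact h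
theorem vS4_42 : SS4 42 = 297171 := by have h := rS4 38; norm_num [vS4_38, vP4_38, vS3_41, vP3_41] at h; exact h
theorem vP4_43 : PP4 43 = 588 := by have h := rP4 39; norm_num [vP4_39, vP3_42] at h; exact h
theorem vS4_43 : SS4 43 = 332122 := by have h := rS4 39; norm_num [vS4_39, vP4_39, vS3_42, vP3_42] at h; exact h
theorem vP4_44 : PP4 44 = 632 := by have h := rP4 40; norm_num [vP4_40, vP3_43] at h; exact h
theorem vS4_44 : SS4 44 = 373796 := by have h := rS4 40; norm_num [vS4_40, vP4_40, vS3_43, vP3_43] at h; exact h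
theorem vP4_45 : PP4 45 = 672 := by have h := rP4 41; norm_num [vP4_41, vP3_44] at h; exact h
theorem vS4_45 : SS4 45 = 415338 := by have h := rS4 41; norm_num [vS4_41, vP4_41, vS3_44, vP3_44] at h; exact h
theorem vP4_46 : PP4 46 = 720 := by have h := rP4 42; norm_num [vP4_42, vP3_45] at h; exact h
theorem vS4_46 : SS4 46 = 465018 := by have h := rS4 42; norm_num [vS4_42, vP4_42, vS3_45, vP3_45] at h; exact h
theorem vP4_47 : PP4 47 = 764 := by have h := rP4 43; norm_num [vP4_43, vP3_46] at h; exact h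
theorem vS4_47 : SS4 47 = 514726 := by have h := rS4 43; norm_num [vS4_43, vP4_43, vS3_46, vP3_46] at h; exact h
theorem vP4_48 : PP4 48 = 816 := by have h := rP4 44; norm_num [vP4_44, vP3_47] at h; exact h
theorem vS4_48 : SS4 48 = 573436 := by have h := rS4 44; norm_num [vS4_44, vP4_44, vS3_47, vP3_47] at h; exact h
theorem vP4_49 : PP4 49 = 864 := by have h := rP4 45; norm_num [vP4_45, vP3_48] at h; exact h
theorem vS4_49 : SS4 49 = 632262 := by have h := rS4 45; norm_num [vS4_45, vP4_45, vS3_48, vP3_48] at h; exact h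
theorem vP4_50 : PP4 50 = 920 := by have h := rP4 46; norm_num [vP4_46, vP3_49] at h; exact h
theorem vS4_50 : SS4 50 = 700998 := by have h := rS4 46; norm_num [vS4_46, vP4_46, vS3_49, vP3_49] at h; exact h
theorem vP4_51 : PP4 51 = 972 := by have h := rP4 47; norm_num [vP4_47, vP3_50] at h; exact h
theorem vS4_51 : SS4 51 = 770034 := by have h := rS4 47; norm_num [vS4_47, vP4_47, vS3_50, vP3_50] at h; exact h
theorem vP4_52 : PP4 52 = 1033 := by have h := rP4 48; norm_num [vP4_48, vP3_51] at h; exact h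
theorem vS4_52 : SS4 52 = 850842 := by have h := rS4 48; norm_num [vS4_48, vP4_48, vS3_51, vP3_51] at h; exact h
theorem vP4_53 : PP4 53 = 1089 := by have h := rP4 49; norm_num [vP4_49, vP3_52] at h; exact h
theorem vS4_53 : SS4 53 = 931179 := by have h := rS4 49; norm_num [vS4_49, vP4_49, vS3_52, vP3_52] at h; exact h
theorem vP4_54 : PP4 54 = 1154 := by have h := rP4 50; norm_num [vP4_50, vP3_53] at h; exact h
theorem vS4_54 : SS4 54 = 1024347 := by have h := rS4 50; norm_num [vS4_50, vP4_50, vS3_53, vP3_53] at h; exact h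
theorem vP4_55 : PP4 55 = 1215 := by have h := rP4 51; norm_num [vP4_51, vP3_54] at h; exact h
theorem vS4_55 : SS4 55 = 1118208 := by have h := rS4 51; norm_num [vS4_51, vP4_51, vS3_54, vP3_54] at h; exact h
theorem vP4_56 : PP4 56 = 1285 := by have h := rP4 52; norm_num [vP4_52, vP3_55] at h; exact h
theorem vS4_56 : SS4 56 = 1226088 := by have h := rS4 52; norm_num [vS4_52, vP4_52, vS3_55, vP3_55] at h; exact h
theorem vP4_57 : PP4 57 = 1350 := by have h := rP4 53; norm_num [vP4_53, vP3_56] at h; exact h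
theorem vS4_57 : SS4 57 = 1333758 := by have h := rS4 53; norm_num [vS4_53, vP4_53, vS3_56, vP3_56] at h; exact h
def Hyp (n : ℕ) : Prop :=
  PP2 (n+54) ≡ PP2 n [MOD 3] ∧ SS2 (n+54) ≡ SS2 n [MOD 3] ∧
  PP3 (n+54) ≡ PP3 n [MOD 3] ∧ SS3 (n+54) ≡ SS3 n [MOD 3] ∧
  SS4 (n+54) ≡ SS4 n [MOD 3]
lemma step (m : ℕ) (h1 : Hyp m) (h2 : Hyp (m+1)) (h3 : Hyp (m+2)) (h4 : Hyp (m+3)) :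
    Hyp (m+4) := by
  obtain ⟨a1,b1,c1,d1,e1⟩ := h1
  obtain ⟨a2,b2,c2,d2,e2⟩ := h2
  obtain ⟨a3,b3,c3,d3,e3⟩ := h3
  obtain ⟨a4,b4,c4,d4,e4⟩ := h4
  have ha3 : PP2 (m+56) ≡ PP2 (m+2) [MOD 3] := by
    rw [show m+56 = m+2+54 from by omega]; exact a3
  have hb3 : SS2 (m+56) ≡ SS2 (m+2) [MOD 3] := by
    rw [show m+56 = m+2+54 from by omega]; exact b3
  have ha4 : PP2 (m+57) ≡ PP2 (m+3) [MOD 3] := by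
    rw [show m+57 = m+3+54 from by omega]; exact a4
  have hb4 : SS2 (m+57) ≡ SS2 (m+3) [MOD 3] := by
    rw [show m+57 = m+3+54 from by omega]; exact b4
  have hc2 : PP3 (m+55) ≡ PP3 (m+1) [MOD 3] := by
    rw [show m+55 = m+1+54 from by omega]; exact c2
  have hd2 : SS3 (m+55) ≡ SS3 (m+1) [MOD 3] := by
    rw [show m+55 = m+1+54 from by omega]; exact d2
  have hc4 : PP3 (m+57) ≡ PP3 (m+3) [MOD 3] := by
    rw [show m+57 = m+3+54 from by omega]; exact c4
  have hd4 : SS3 (m+57) ≡ SS3 (m+3) [MOD 3] := by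
    rw [show m+57 = m+3+54 from by omega]; exact d4
  refine ⟨?_, ?_, ?_, ?_, ?_⟩
  · -- PP2
    rw [show m+4+54 = m+56+2 from by omega, rP2 (m+56), show m+4 = m+2+2 from by omega,
      rP2 (m+2)]
    exact ha3.add_right 1
  · -- SS2
    rw [show m+4+54 = m+56+2 from by omega, rS2 (m+56), show m+4 = m+2+2 from by omega,
      rS2 (m+2)]
    have hm : m+57 ≡ m+3 [MOD 3] := by unfold Nat.ModEq; omega
    exact (hb3.add (hm.mul ha3)).add hm
  · -- PP3
    rw [show m+4+54 = m+55+3 from by omega, rP3 (m+55), show m+4 = m+1+3 from by omega,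
      rP3 (m+1)]
    have h1 : PP2 (m+55+2) ≡ PP2 (m+1+2) [MOD 3] := by
      rw [show m+55+2 = m+57 from by omega, show m+1+2 = m+3 from by omega]; exact ha4
    exact hc2.add h1
  · -- SS3
    rw [show m+4+54 = m+55+3 from by omega, rS3 (m+55), show m+4 = m+1+3 from by omega,
      rS3 (m+1)]
    have i1 : PP2 (m+55+2) ≡ PP2 (m+1+2) [MOD 3] := by
      rw [show m+55+2 = m+57 from by omega, show m+1+2 = m+3 from by omega]; exact ha4
    have i2 : SS2 (m+55+2) ≡ SS2 (m+1+2) [MOD 3] := by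
      rw [show m+55+2 = m+57 from by omega, show m+1+2 = m+3 from by omega]; exact hb4
    have hm1 : 2*(m+55)+3 ≡ 2*(m+1)+3 [MOD 3] := by unfold Nat.ModEq; omega
    have hm2 : m+55+2 ≡ m+1+2 [MOD 3] := by unfold Nat.ModEq; omega
    exact ((hd2.add (hm1.mul hc2)).add i2).add (hm2.mul i1)
  · -- SS4
    rw [show m+4+54 = m+54+4 from by omega, rS4 (m+54), rS4 m]
    have j1 : SS3 (m+54+3) ≡ SS3 (m+3) [MOD 3] := by
      rw [show m+54+3 = m+57 from by omega]; exact hd4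
    have j2 : PP3 (m+54+3) ≡ PP3 (m+3) [MOD 3] := by
      rw [show m+54+3 = m+57 from by omega]; exact hc4
    have j3 : (3*(m+54)+6) * PP4 (m+54) ≡ (3*m+6) * PP4 m [MOD 3] := by
      have u1 : (3*(m+54)+6) * PP4 (m+54) ≡ 0 [MOD 3] :=
        (Nat.modEq_zero_iff_dvd).2 (Dvd.dvd.mul_right ⟨m+56, by ring⟩ _)
      have u2 : (3*m+6) * PP4 m ≡ 0 [MOD 3] :=
        (Nat.modEq_zero_iff_dvd).2 (Dvd.dvd.mul_right ⟨m+2, by ring⟩ _)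
      exact u1.trans u2.symm
    have hm3 : m+54+3 ≡ m+3 [MOD 3] := by unfold Nat.ModEq; omega
    exact ((e1.add j3).add j1).add (hm3.mul j2)
lemma hyp0 : Hyp 0 := by
  refine ⟨?_, ?_, ?_, ?_, ?_⟩
  · show PP2 (0+54) ≡ PP2 0 [MOD 3]
    norm_num [Nat.ModEq, vP2_54, vP2_0]
  · show SS2 (0+54) ≡ SS2 0 [MOD 3]
    norm_num [Nat.ModEq, vS2_54, vS2_0]
  · show PP3 (0+54) ≡ PP3 0 [MOD 3]
    norm_num [Nat.ModEq, vP3_54, vP3_0]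
  · show SS3 (0+54) ≡ SS3 0 [MOD 3]
    norm_num [Nat.ModEq, vS3_54, vS3_0]
  · show SS4 (0+54) ≡ SS4 0 [MOD 3]
    norm_num [Nat.ModEq, vS4_54, vS4_0]
lemma hyp1 : Hyp 1 := by
  refine ⟨?_, ?_, ?_, ?_, ?_⟩
  · show PP2 (1+54) ≡ PP2 1 [MOD 3]
    norm_num [Nat.ModEq, vP2_55, vP2_1]
  · show SS2 (1+54) ≡ SS2 1 [MOD 3]
    norm_num [Nat.ModEq, vS2_55, vS2_1]
  · show PP3 (1+54) ≡ PP3 1 [MOD 3]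
    norm_num [Nat.ModEq, vP3_55, vP3_1]
  · show SS3 (1+54) ≡ SS3 1 [MOD 3]
    norm_num [Nat.ModEq, vS3_55, vS3_1]
  · show SS4 (1+54) ≡ SS4 1 [MOD 3]
    norm_num [Nat.ModEq, vS4_55, vS4_1]
lemma hyp2 : Hyp 2 := by
  refine ⟨?_, ?_, ?_, ?_, ?_⟩
  · show PP2 (2+54) ≡ PP2 2 [MOD 3]
    norm_num [Nat.ModEq, vP2_56, vP2_2]
  · show SS2 (2+54) ≡ SS2 2 [MOD 3]
    norm_num [Nat.ModEq, vS2_56, vS2_2]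
  · show PP3 (2+54) ≡ PP3 2 [MOD 3]
    norm_num [Nat.ModEq, vP3_56, vP3_2]
  · show SS3 (2+54) ≡ SS3 2 [MOD 3]
    norm_num [Nat.ModEq, vS3_56, vS3_2]
  · show SS4 (2+54) ≡ SS4 2 [MOD 3]
    norm_num [Nat.ModEq, vS4_56, vS4_2]
lemma hyp3 : Hyp 3 := by
  refine ⟨?_, ?_, ?_, ?_, ?_⟩
  · show PP2 (3+54) ≡ PP2 3 [MOD 3]
    norm_num [Nat.ModEq, vP2_57, vP2_3]
  · show SS2 (3+54) ≡ SS2 3 [MOD 3]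
    norm_num [Nat.ModEq, vS2_57, vS2_3]
  · show PP3 (3+54) ≡ PP3 3 [MOD 3]
    norm_num [Nat.ModEq, vP3_57, vP3_3]
  · show SS3 (3+54) ≡ SS3 3 [MOD 3]
    norm_num [Nat.ModEq, vS3_57, vS3_3]
  · show SS4 (3+54) ≡ SS4 3 [MOD 3]
    norm_num [Nat.ModEq, vS4_57, vS4_3]
lemma allHyp (n : ℕ) : Hyp n := by
  induction n using Nat.strong_induction_on with
  | _ n ih =>
    match n with
    | 0 => exact hyp0
    | 1 => exact hyp1
    | 2 => exact hyp2
    | 3 => exact hyp3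
    | (m+4) =>
      exact step m (ih m (by omega)) (ih (m+1) (by omega)) (ih (m+2) (by omega)) (ih (m+3) (by omega))


lemma esymm2 (a b c d : ℕ) : (a ::ₘ b ::ₘ c ::ₘ d ::ₘ 0 : Multiset ℕ).esymm 2 = w4 a b c d := by
  simp [Multiset.esymm, Multiset.powersetCard_cons, Multiset.powersetCard_zero_left,
    Multiset.powersetCard_one, w4]
  ring

def toT (n : ℕ) (π : Nat.Partition n) : ℕ×ℕ×ℕ×ℕ :=
  match π.parts.sort (· ≤ ·) with
  | [a,b,c,d] => (a,b,c,d)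
  | _ => (0,0,0,0)

lemma parts_decomp {n : ℕ} (π : Nat.Partition n) (h : Multiset.card π.parts = 4) :
    ∃ a b c d : ℕ, π.parts.sort (· ≤ ·) = [a,b,c,d] := by
  have hl : (π.parts.sort (· ≤ ·)).length = 4 := by
    rw [Multiset.length_sort]; exact h
  rcases hsort : π.parts.sort (· ≤ ·) with _|⟨a,_|⟨b,_|⟨c,_|⟨d,_|_⟩⟩⟩⟩ <;>
    rw [hsort] at hl <;> simp_all

lemma e2p4_eq (n : ℕ) : e2p4 n = SS4 n := by
  rw [e2p4, SS4]
  apply Finset.sum_bij (fun π _ => toT n π)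
  · -- maps to T4
    intro π hπ
    rw [mem_filter] at hπ
    obtain ⟨a,b,c,d,hs⟩ := parts_decomp π hπ.2
    have hsorted := Multiset.pairwise_sort π.parts (· ≤ ·)
    rw [hs] at hsorted
    simp only [List.pairwise_cons, List.mem_cons] at hsorted
    have hmem : ∀ x ∈ [a,b,c,d], x ∈ π.parts := by
      intro x hx
      rw [← Multiset.mem_sort (· ≤ ·), hs]; exact hx
    have hpos : 0 < a := π.parts_pos (hmem a (by simp))
    have hsum : a + b + c + d = n := by
      have h1 : ((π.parts.sort (· ≤ ·) : List ℕ) : Multiset ℕ).sum = n := by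
        rw [Multiset.sort_eq]; exact π.parts_sum
      rw [hs] at h1
      simp only [Multiset.sum_coe, List.sum_cons, List.sum_nil] at h1
      omega
    have : toT n π = (a,b,c,d) := by rw [toT, hs]
    rw [this, T4, mem_filter, mem_product, mem_range]
    simp only [mem_product, mem_range]
    refine ⟨⟨by omega, by omega, by omega, by omega⟩, by omega, by simp_all, by simp_all, by simp_all, by omega⟩
  · -- injective
    intro π1 h1 π2 h2 heq
    rw [mem_filter] at h1 h2
    obtain ⟨a,b,c,d,hs1⟩ := parts_decomp π1 h1.2
    obtain ⟨a',b',c',d',hs2⟩ := parts_decomp π2 h2.2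
    rw [toT, hs1, toT, hs2] at heq
    simp only [Prod.mk.injEq] at heq
    obtain ⟨rfl, rfl, rfl, rfl⟩ := heq
    have : π1.parts = π2.parts := by
      rw [← Multiset.sort_eq π1.parts (· ≤ ·), ← Multiset.sort_eq π2.parts (· ≤ ·), hs1, hs2]
    exact Nat.Partition.ext this
  · -- surjective
    rintro ⟨a,b,c,d⟩ hx
    rw [T4, mem_filter] at hx
    obtain ⟨-, h1, h2, h3, h4, h5⟩ := hx
    dsimp only at h1 h2 h3 h4 h5
    refine ⟨⟨a ::ₘ b ::ₘ c ::ₘ d ::ₘ 0, ?_, ?_⟩, ?_, ?_⟩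
    · intro i hi; simp at hi; rcases hi with rfl|rfl|rfl|rfl <;> omega
    · simp only [Multiset.sum_cons, Multiset.sum_zero]; omega
    · rw [mem_filter]; constructor
      · exact mem_univ _
      · rfl
    · show toT n _ = _
      rw [toT]
      have hcoe : (a ::ₘ b ::ₘ c ::ₘ d ::ₘ 0 : Multiset ℕ) = ([a,b,c,d] : List ℕ) := by rfl
      have hperm : ((a ::ₘ b ::ₘ c ::ₘ d ::ₘ 0 : Multiset ℕ).sort (· ≤ ·)).Perm [a,b,c,d] := by
        rw [← Multiset.coe_eq_coe, Multiset.sort_eq, hcoe]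
      have hsorted : List.Pairwise (· ≤ ·) [a,b,c,d] := by
        simp [List.pairwise_cons]; omega
      have := List.Perm.eq_of_pairwise'
        (Multiset.pairwise_sort _ (· ≤ ·)) hsorted hperm
      rw [this]
  · -- values agree
    intro π hπ
    rw [mem_filter] at hπ
    obtain ⟨a,b,c,d,hs⟩ := parts_decomp π hπ.2
    have hparts : π.parts = (a ::ₘ b ::ₘ c ::ₘ d ::ₘ 0 : Multiset ℕ) := by
      rw [← Multiset.sort_eq π.parts (· ≤ ·), hs]; rfl
    rw [toT, hs, hparts, esymm2]

theorem e2p4_period_mod_three (n : ℕ) : e2p4 (n + 54) ≡ e2p4 n [MOD 3] := by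
  rw [e2p4_eq, e2p4_eq]
  exact (allHyp n).2.2.2.2
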